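/- Neither the group C₂×C₃×C₃ of order 18 nor the group C₂×C₂×C₃ of order 12 admits a small Mathieu representation. -/

import Mathlib

/-- The character value of the small Mathieu representation at an element of the given order. -/
def mathieuCharValue : ℕ → ℂ
  | 1 => 12
  | 2 => 4
  | 3 => 3
  | 4 => 4
  | 5 => 2
  | 6 => 1
  | 8 => 2
  | 11 => 1
  | _ => 0

/-- A representation is a small Mathieu representation if it is 12-dimensional, every group
element has order in {1,2,3,4,5,6,8,11}, and the character at `g` depends only on the order
of `g`, with the values of the permutation character of `M₁₁` acting on 12 points. -/
def IsSmallMathieuRep {G : Type*} [Group G] {V : Type*} [AddCommGroup V] [Module ℂ V]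
    (ρ : Representation ℂ G V) : Prop :=
  Module.finrank ℂ V = 12 ∧
    (∀ g : G, orderOf g ∈ ({1, 2, 3, 4, 5, 6, 8, 11} : Set ℕ)) ∧
    (∀ g : G, LinearMap.trace ℂ V (ρ g) = mathieuCharValue (orderOf g))

/-- `G` admits a small Mathieu representation. -/
def HasSmallMathieuRep (G : Type*) [Group G] : Prop :=
  ∃ (V : Type) (_ : AddCommGroup V) (_ : Module ℂ V) (ρ : Representation ℂ G V),
    IsSmallMathieuRep ρ

/-- `G` admits a small Mathieu representation whose invariant subspace has dimension ≥ 3. -/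
def HasSmallMathieuRep3 (G : Type*) [Group G] : Prop :=
  ∃ (V : Type) (_ : AddCommGroup V) (_ : Module ℂ V) (ρ : Representation ℂ G V),
    IsSmallMathieuRep ρ ∧ 3 ≤ Module.finrank ℂ ρ.invariants

/-- Condition (4): `G` has a small Mathieu representation `V` with `dim V^G ≥ 3`, the 2-Sylow
subgroups of `G` embed into `S₆`, and `G` is not isomorphic to the dicyclic group `Q₁₂`
(realized in Mathlib as `QuaternionGroup 3`). -/
def Condition4 (G : Type*) [Group G] [Fintype G] : Prop :=
  HasSmallMathieuRep3 G ∧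
    (∀ P : Sylow 2 G, ∃ f : P →* Equiv.Perm (Fin 6), Function.Injective f) ∧
    IsEmpty (G ≃* QuaternionGroup 3)

/-! ### Auxiliary material -/

/-- Twist of a representation by a scalar character. -/
def twistRep {G V : Type*} [Group G] [AddCommGroup V] [Module ℂ V]
    (ρ : Representation ℂ G V) (lam : G →* ℂ) : Representation ℂ G V where
  toFun g := lam g • ρ g
  map_one' := by simp
  map_mul' g h := by
    simp only [map_mul]
    rw [smul_mul_smul_comm]

/-- The key character-theoretic obstruction: for any character `lam`, the `lam`-twisted
average of the character of a small Mathieu representation times the group order is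
a natural number (the dimension of the invariants of the twisted representation). -/
lemma mathieu_key {G : Type} [Group G] [Fintype G] {V : Type} [AddCommGroup V] [Module ℂ V]
    (ρ : Representation ℂ G V) (h : IsSmallMathieuRep ρ) (lam : G →* ℂ) :
    ∃ n : ℕ, ∑ g : G, lam g * mathieuCharValue (orderOf g) = (Fintype.card G : ℂ) * n := by
  obtain ⟨hdim, -, hχ⟩ := h
  have : FiniteDimensional ℂ V := FiniteDimensional.of_finrank_pos (by rw [hdim]; norm_num)
  have hc : (Fintype.card G : ℂ) ≠ 0 := Nat.cast_ne_zero.mpr Fintype.card_ne_zero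
  have : Invertible (Fintype.card G : ℂ) := invertibleOfNonzero hc
  have havg := FDRep.average_char_eq_finrank_invariants (FDRep.of (twistRep ρ lam))
  refine ⟨Module.finrank ℂ ((twistRep ρ lam).invariants), ?_⟩
  have hch : ∀ g : G, (FDRep.of (twistRep ρ lam)).character g
      = lam g * mathieuCharValue (orderOf g) := by
    intro g
    show LinearMap.trace ℂ V (lam g • ρ g) = _
    rw [map_smul, smul_eq_mul, hχ]
  rw [Finset.sum_congr rfl (fun g _ => hch g)] at havg
  have := congrArg (fun z : ℂ => (Fintype.card G : ℂ) * z) havg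
  simp [smul_eq_mul, ← mul_assoc, mul_invOf_self, hc] at this
  convert this using 3 <;> rfl

noncomputable def om : ℂ := Complex.exp (2 * Real.pi * Complex.I / (3 : ℕ))

lemma om_prim : IsPrimitiveRoot om 3 := Complex.isPrimitiveRoot_exp 3 (by norm_num)

lemma om_pow3 : om ^ 3 = 1 := om_prim.pow_eq_one

lemma om_sum : 1 + om + om ^ 2 = 0 := by
  have := om_prim.geom_sum_eq_zero (by norm_num)
  simpa [Finset.sum_range_succ] using this

lemma om_pow_mod (x : ℕ) : om ^ x = om ^ (x % 3) := by
  conv_lhs => rw [← Nat.mod_add_div x 3]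
  rw [pow_add, pow_mul, om_pow3, one_pow, mul_one]

/-- A character of order 3 on `C₂×C₂×C₃`. -/
noncomputable def lam2 : Multiplicative (ZMod 2 × ZMod 2 × ZMod 3) →* ℂ where
  toFun g := om ^ (g.toAdd.2.2).val
  map_one' := by show om ^ (ZMod.val (0 : ZMod 3)) = 1; simp
  map_mul' g h := by
    show om ^ ((g.toAdd.2.2 + h.toAdd.2.2).val) = _
    rw [ZMod.val_add, ← om_pow_mod, pow_add]

lemma lam2_apply (x : ZMod 2 × ZMod 2 × ZMod 3) :
    lam2 (Multiplicative.ofAdd x) = om ^ x.2.2.val := rfl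

lemma z2sum (f : ZMod 2 → ℂ) : ∑ x, f x = f 0 + f 1 := by
  exact Fin.sum_univ_two f

lemma z3sum (f : ZMod 3 → ℂ) : ∑ x, f x = f 0 + f 1 + f 2 := by
  exact Fin.sum_univ_three f

lemma o20 : addOrderOf (0 : ZMod 2) = 1 := addOrderOf_zero
lemma o21 : addOrderOf (1 : ZMod 2) = 2 := ZMod.addOrderOf_one 2
lemma o30 : addOrderOf (0 : ZMod 3) = 1 := addOrderOf_zero
lemma o31 : addOrderOf (1 : ZMod 3) = 3 := ZMod.addOrderOf_one 3
lemma o32 : addOrderOf (2 : ZMod 3) = 3 := by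
  rw [show (2 : ZMod 3) = ((2 : ℕ) : ZMod 3) by norm_num, ZMod.addOrderOf_coe 2 (by norm_num)]; rfl

lemma ordm {A B C : Type*} [AddGroup A] [AddGroup B] [AddGroup C] (a : A) (b : B) (c : C) :
    orderOf (Multiplicative.ofAdd (a, b, c))
      = Nat.lcm (addOrderOf a) (Nat.lcm (addOrderOf b) (addOrderOf c)) := by
  rw [orderOf_ofAdd_eq_addOrderOf, Prod.addOrderOf, Prod.addOrderOf]

lemma mcv1 : mathieuCharValue 1 = 12 := rfl
lemma mcv2 : mathieuCharValue 2 = 4 := rfl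
lemma mcv3 : mathieuCharValue 3 = 3 := rfl
lemma mcv6 : mathieuCharValue 6 = 1 := rfl

/-- Neither `C₂×C₃×C₃` (of order 18) nor `C₂×C₂×C₃` (of order 12) admits a small Mathieu
representation. -/
theorem no_small_mathieu_rep_C2C3C3_C2C2C3 :
    ¬ HasSmallMathieuRep (Multiplicative (ZMod 2 × ZMod 3 × ZMod 3)) ∧
      ¬ HasSmallMathieuRep (Multiplicative (ZMod 2 × ZMod 2 × ZMod 3)) := by
  constructor
  · rintro ⟨V, _, _, ρ, hρ⟩
    obtain ⟨n, hn⟩ := mathieu_key ρ hρ 1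
    have hcard : (Fintype.card (Multiplicative (ZMod 2 × ZMod 3 × ZMod 3)) : ℂ) = 18 := by
      norm_num [Fintype.card_prod]
    rw [hcard] at hn
    have hsum : ∑ g : Multiplicative (ZMod 2 × ZMod 3 × ZMod 3),
        (1 : Multiplicative (ZMod 2 × ZMod 3 × ZMod 3) →* ℂ) g
          * mathieuCharValue (orderOf g) = 48 := by
      show ∑ x : ZMod 2 × ZMod 3 × ZMod 3,
        (1 : Multiplicative (ZMod 2 × ZMod 3 × ZMod 3) →* ℂ) (Multiplicative.ofAdd x)
          * mathieuCharValue (orderOf (Multiplicative.ofAdd x)) = 48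
      simp only [MonoidHom.one_apply, one_mul, Fintype.sum_prod_type, z2sum, z3sum,
        ordm, o20, o21, o30, o31, o32]
      norm_num [mcv1, mcv2, mcv3, mcv6]
    rw [hsum] at hn
    have hnat : (48 : ℕ) = 18 * n := by exact_mod_cast hn
    omega
  · rintro ⟨V, _, _, ρ, hρ⟩
    obtain ⟨n, hn⟩ := mathieu_key ρ hρ lam2
    have hcard : (Fintype.card (Multiplicative (ZMod 2 × ZMod 2 × ZMod 3)) : ℂ) = 12 := by
      norm_num [Fintype.card_prod]
    rw [hcard] at hn
    have hsum : ∑ g : Multiplicative (ZMod 2 × ZMod 2 × ZMod 3),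
        lam2 g * mathieuCharValue (orderOf g) = 24 + 6 * om + 6 * om ^ 2 := by
      show ∑ x : ZMod 2 × ZMod 2 × ZMod 3,
        lam2 (Multiplicative.ofAdd x)
          * mathieuCharValue (orderOf (Multiplicative.ofAdd x)) = 24 + 6 * om + 6 * om ^ 2
      simp only [lam2_apply, Fintype.sum_prod_type, z2sum, z3sum,
        ordm, o20, o21, o30, o31, o32]
      norm_num [mcv1, mcv2, mcv3, mcv6, ZMod.val_zero, ZMod.val_one,
        show ZMod.val (2 : ZMod 3) = 2 from rfl]
      ring
    rw [hsum] at hn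
    have h18 : (18 : ℂ) = 12 * n := by linear_combination hn - 6 * om_sum
    have hnat : (18 : ℕ) = 12 * n := by exact_mod_cast h18
    omega
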